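/- (Theorem 8) The combined operator P U^y_π satisfies (P U^y_π) U^tw_{±2π} = (−1)^{2S} U^tw_{±2π} (P U^y_π). Consequently, if 2S is odd and ψ₀ ∈ H_L satisfies P U^y_π ψ₀ = ±ψ₀, then ⟨ψ₀, U^tw_{2π} ψ₀⟩ = 0. -/

import Mathlib

open scoped BigOperators Matrix
open Fin.NatCast
noncomputable section

namespace LSM

/-- Number of basis states per site: `2S+1`. -/
abbrev N (twoS : ℕ) : ℕ := twoS + 1

/-- The spin value `S` as a real number (so `2S = twoS`). -/
def spin (twoS : ℕ) : ℝ := (twoS : ℝ) / 2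

/-- The `S^z`-value of the `k`-th basis vector: `m = S - k`, `k = 0, …, 2S`. -/
def mval (twoS : ℕ) (k : Fin (N twoS)) : ℝ := spin twoS - (k : ℕ)

/-- Single-site `S^z` matrix. -/
def SzMat (twoS : ℕ) : Matrix (Fin (N twoS)) (Fin (N twoS)) ℂ :=
  Matrix.diagonal fun k => (mval twoS k : ℂ)

/-- Single-site raising operator `S^+`. -/
def SpMat (twoS : ℕ) : Matrix (Fin (N twoS)) (Fin (N twoS)) ℂ :=
  Matrix.of fun a b =>
    if (a : ℕ) + 1 = (b : ℕ) then
      ((Real.sqrt (spin twoS * (spin twoS + 1) - mval twoS b * (mval twoS b + 1)) : ℝ) : ℂ)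
    else 0

/-- Single-site lowering operator `S^-`. -/
def SmMat (twoS : ℕ) : Matrix (Fin (N twoS)) (Fin (N twoS)) ℂ :=
  Matrix.of fun a b =>
    if (a : ℕ) = (b : ℕ) + 1 then
      ((Real.sqrt (spin twoS * (spin twoS + 1) - mval twoS b * (mval twoS b - 1)) : ℝ) : ℂ)
    else 0

/-- Single-site `S^y = (S^+ - S^-)/(2i)`. -/
def SyMat (twoS : ℕ) : Matrix (Fin (N twoS)) (Fin (N twoS)) ℂ :=
  ((2 : ℂ) * Complex.I)⁻¹ • (SpMat twoS - SmMat twoS)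

/-- Single-site `S^x = (S^+ + S^-)/2`. -/
def SxMat (twoS : ℕ) : Matrix (Fin (N twoS)) (Fin (N twoS)) ℂ :=
  ((2 : ℂ))⁻¹ • (SpMat twoS + SmMat twoS)

/-- Configurations (product basis labels) of the chain of length `L`. -/
abbrev Conf (twoS L : ℕ) := Fin L → Fin (N twoS)

/-- Operators on the chain Hilbert space `⊗_{j=1}^L ℂ^{2S+1}`, as matrices in the
product basis. -/
abbrev Op (twoS L : ℕ) := Matrix (Conf twoS L) (Conf twoS L) ℂ

/-- The single-site matrix `A` acting on the `j`-th tensor factor (identity elsewhere). -/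
def site (twoS L : ℕ) (j : Fin L) (A : Matrix (Fin (N twoS)) (Fin (N twoS)) ℂ) :
    Op twoS L :=
  Matrix.of fun x y => if ∀ i, i ≠ j → x i = y i then A (x j) (y j) else 0

/-- Total `S^z`. -/
def SzT (twoS L : ℕ) : Op twoS L := ∑ j : Fin L, site twoS L j (SzMat twoS)

/-- Total `S^y`. -/
def SyT (twoS L : ℕ) : Op twoS L := ∑ j : Fin L, site twoS L j (SyMat twoS)

/-- Translation by one site: the permutation matrix with
`Utrl† A_j Utrl = A_{j+1}` for every single-site operator `A`. -/
def Utrl (twoS L : ℕ) [NeZero L] : Op twoS L :=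
  Matrix.of fun x y => if x = (fun i => y (i + 1)) then 1 else 0

/-- Site parity (space inversion `j ↦ L - j = -j (mod L)`): the permutation matrix with
`P† A_j P = A_{L-j}` for every single-site operator `A`. -/
def Pop (twoS L : ℕ) [NeZero L] : Op twoS L :=
  Matrix.of fun x y => if x = (fun i => y (-i)) then 1 else 0

/-- Link parity `P_link = P U_trl`. -/
def Plink (twoS L : ℕ) [NeZero L] : Op twoS L := Pop twoS L * Utrl twoS L

/-- The generalized XXZ Hamiltonian with periodic boundary conditions. -/
def Ham (twoS L : ℕ) [NeZero L] (J Δ : ℕ → ℝ) (h : ℝ) : Op twoS L :=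
  (∑ j : Fin L, ∑ r ∈ Finset.Icc 1 (L / 2),
      ((((J r : ℝ) : ℂ) / 2) •
        (site twoS L j (SpMat twoS) * site twoS L (j + (r : Fin L)) (SmMat twoS) +
          site twoS L j (SmMat twoS) * site twoS L (j + (r : Fin L)) (SpMat twoS)) +
      ((Δ r : ℝ) : ℂ) •
        (site twoS L j (SzMat twoS) * site twoS L (j + (r : Fin L)) (SzMat twoS)))) +
    (h : ℂ) • SzT twoS L

/-- The generator `Σ_{j=1}^{L} j (S^z_j - S)` of the (site-centered) twist. -/
def twistGen (twoS L : ℕ) [NeZero L] : Op twoS L :=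
  ∑ j ∈ Finset.Icc 1 L,
    (j : ℂ) • site twoS L ((j : ℕ) : Fin L) (SzMat twoS - ((spin twoS : ℝ) : ℂ) • 1)

/-- The twist operator `U^tw_{ε·2π} = exp(-ε (2πi/L) Σ_j j (S^z_j - S))`, `ε = ±1`. -/
def Utw (twoS L : ℕ) [NeZero L] (ε : ℝ) : Op twoS L :=
  NormedSpace.exp ((-(ε : ℂ) * ((2 * Real.pi / L : ℝ) : ℂ) * Complex.I) • twistGen twoS L)

/-- The generator `Σ_{j=1}^{L} (j - 1/2)(S^z_j - S)` of the link-centered twist. -/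
def twistGenL (twoS L : ℕ) [NeZero L] : Op twoS L :=
  ∑ j ∈ Finset.Icc 1 L,
    ((j : ℂ) - 1 / 2) • site twoS L ((j : ℕ) : Fin L) (SzMat twoS - ((spin twoS : ℝ) : ℂ) • 1)

/-- The link-centered twist operator `U^twl_{ε·2π}`, `ε = ±1`. -/
def UtwL (twoS L : ℕ) [NeZero L] (ε : ℝ) : Op twoS L :=
  NormedSpace.exp ((-(ε : ℂ) * ((2 * Real.pi / L : ℝ) : ℂ) * Complex.I) • twistGenL twoS L)

/-- The spin-reversal operator `U^y_π = exp(-iπ S^y_T)`. -/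
def Uy (twoS L : ℕ) : Op twoS L :=
  NormedSpace.exp ((-Complex.I * ((Real.pi : ℝ) : ℂ)) • SyT twoS L)

/-- The sector `V(M, q)` of simultaneous eigenvectors of `S^z_T` (eigenvalue `M`) and of
the translation `U_trl` (eigenvalue `e^{iq}`). -/
def Vsp (twoS L : ℕ) [NeZero L] (M q : ℝ) : Submodule ℂ (Conf twoS L → ℂ) :=
  Module.End.eigenspace (Matrix.mulVecLin (SzT twoS L)) ((M : ℝ) : ℂ) ⊓
    Module.End.eigenspace (Matrix.mulVecLin (Utrl twoS L)) (Complex.exp (Complex.I * q))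

/-- `E(M; q)`: the smallest eigenvalue of `H` restricted to the sector `V(M,q)`. -/
def En (twoS L : ℕ) [NeZero L] (J Δ : ℕ → ℝ) (h : ℝ) (M q : ℝ) : ℝ :=
  sInf {E : ℝ | ∃ ψ ∈ Vsp twoS L M q, ψ ≠ 0 ∧
    (Ham twoS L J Δ h).mulVec ψ = ((E : ℝ) : ℂ) • ψ}

/-- The expectation value `⟨ψ, A ψ⟩`. -/
def expVal (twoS L : ℕ) (A : Op twoS L) (ψ : Conf twoS L → ℂ) : ℂ :=
  dotProduct (star ψ) (A.mulVec ψ)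

/-- `q` belongs to the lattice `(2π/L)ℤ` of allowed wavenumbers. -/
def allowedQ (L : ℕ) (q : ℝ) : Prop := ∃ k : ℤ, q = 2 * Real.pi * k / L



section Aux
variable {twoS : ℕ}

lemma val_le (a : Fin (N twoS)) : (a : ℕ) ≤ twoS := Nat.lt_succ_iff.mp a.isLt

lemma arg1_nonneg (a : Fin (N twoS)) :
    0 ≤ spin twoS * (spin twoS + 1) - mval twoS a * (mval twoS a - 1) := by
  have h : ((a : ℕ) : ℝ) ≤ (twoS : ℝ) := by exact_mod_cast val_le a
  have h0 : (0:ℝ) ≤ ((a:ℕ) : ℝ) := Nat.cast_nonneg _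
  unfold mval spin
  nlinarith [mul_nonneg (by linarith : (0:ℝ) ≤ 1 + ((a:ℕ):ℝ))
    (by linarith : (0:ℝ) ≤ (twoS:ℝ) - ((a:ℕ):ℝ))]

lemma arg2_nonneg (a : Fin (N twoS)) :
    0 ≤ spin twoS * (spin twoS + 1) - mval twoS a * (mval twoS a + 1) := by
  have h : ((a : ℕ) : ℝ) ≤ (twoS : ℝ) := by exact_mod_cast val_le a
  have h0 : (0:ℝ) ≤ ((a:ℕ) : ℝ) := Nat.cast_nonneg _
  unfold mval spin
  nlinarith [mul_nonneg h0 (by linarith : (0:ℝ) ≤ (twoS:ℝ) - ((a:ℕ):ℝ) + 1)]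

lemma hI2 : ((2:ℂ) * Complex.I)⁻¹ = -(Complex.I)/2 := by
  rw [mul_inv, Complex.inv_I]; ring

lemma SpMat_pos {a b : Fin (N twoS)} (h : (a:ℕ)+1 = (b:ℕ)) :
    SpMat twoS a b = ((Real.sqrt (spin twoS * (spin twoS + 1)
      - mval twoS b * (mval twoS b + 1)) : ℝ) : ℂ) := by
  unfold SpMat; rw [Matrix.of_apply, if_pos h]

lemma SpMat_neg {a b : Fin (N twoS)} (h : ¬ ((a:ℕ)+1 = (b:ℕ))) : SpMat twoS a b = 0 := by
  unfold SpMat; rw [Matrix.of_apply, if_neg h]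

lemma SmMat_pos {a b : Fin (N twoS)} (h : (a:ℕ) = (b:ℕ)+1) :
    SmMat twoS a b = ((Real.sqrt (spin twoS * (spin twoS + 1)
      - mval twoS b * (mval twoS b - 1)) : ℝ) : ℂ) := by
  unfold SmMat; rw [Matrix.of_apply, if_pos h]

lemma SmMat_neg {a b : Fin (N twoS)} (h : ¬ ((a:ℕ) = (b:ℕ)+1)) : SmMat twoS a b = 0 := by
  unfold SmMat; rw [Matrix.of_apply, if_neg h]

lemma Sz_comm_Sp : SzMat twoS * SpMat twoS - SpMat twoS * SzMat twoS = SpMat twoS := by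
  ext a b
  simp only [Matrix.sub_apply, SzMat, Matrix.diagonal_mul, Matrix.mul_diagonal]
  by_cases h : (a:ℕ)+1 = (b:ℕ)
  · rw [SpMat_pos h]
    have hr : mval twoS a = mval twoS b + 1 := by
      have h2 : ((a:ℕ):ℝ) + 1 = ((b:ℕ):ℝ) := by exact_mod_cast h
      unfold mval; linarith
    rw [hr]; push_cast; ring
  · rw [SpMat_neg h]; ring

lemma Sz_comm_Sm : SzMat twoS * SmMat twoS - SmMat twoS * SzMat twoS = -(SmMat twoS) := by
  ext a b
  simp only [Matrix.sub_apply, SzMat, Matrix.diagonal_mul, Matrix.mul_diagonal,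
    Matrix.neg_apply]
  by_cases h : (a:ℕ) = (b:ℕ)+1
  · rw [SmMat_pos h]
    have hr : mval twoS a = mval twoS b - 1 := by
      have h2 : ((a:ℕ):ℝ) = ((b:ℕ):ℝ) + 1 := by exact_mod_cast h
      unfold mval; linarith
    rw [hr]; push_cast; ring
  · rw [SmMat_neg h]; ring

lemma Sp_mul_Sm : SpMat twoS * SmMat twoS =
    Matrix.diagonal (fun a => ((spin twoS * (spin twoS + 1)
      - mval twoS a * (mval twoS a - 1) : ℝ) : ℂ)) := by
  ext a b
  rw [Matrix.mul_apply]
  by_cases ha : (a:ℕ) < twoS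
  · have hlt : (a:ℕ)+1 < N twoS := by simp only [N]; omega
    have hc0v : ((⟨(a:ℕ)+1, hlt⟩ : Fin (N twoS)):ℕ) = (a:ℕ)+1 := rfl
    rw [Finset.sum_eq_single (⟨(a:ℕ)+1, hlt⟩ : Fin (N twoS))]
    · rw [SpMat_pos hc0v.symm]
      by_cases hab : a = b
      · subst hab
        rw [SmMat_pos (by omega), Matrix.diagonal_apply_eq]
        have harg : mval twoS (⟨(a:ℕ)+1, hlt⟩ : Fin (N twoS))
            * (mval twoS (⟨(a:ℕ)+1, hlt⟩ : Fin (N twoS)) + 1)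
            = mval twoS a * (mval twoS a - 1) := by
          unfold mval
          rw [show ((((⟨(a:ℕ)+1, hlt⟩ : Fin (N twoS))):ℕ):ℝ) = ((a:ℕ):ℝ) + 1 by
            rw [hc0v]; push_cast; ring]
          ring
        rw [harg, ← Complex.ofReal_mul, Real.mul_self_sqrt (arg1_nonneg a)]
      · rw [SmMat_neg, Matrix.diagonal_apply_ne _ hab, mul_zero]
        rw [hc0v]
        intro hc
        exact hab (Fin.ext (by omega))
    · intro c _ hc
      rw [SpMat_neg, zero_mul]
      intro h
      exact hc (Fin.ext (by rw [hc0v]; omega))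
    · intro h; exact absurd (Finset.mem_univ _) h
  · have ha' : (a:ℕ) = twoS := by have := val_le a; omega
    rw [Finset.sum_eq_zero]
    · symm
      by_cases hab : a = b
      · subst hab
        rw [Matrix.diagonal_apply_eq]
        have : spin twoS * (spin twoS + 1) - mval twoS a * (mval twoS a - 1) = 0 := by
          unfold mval spin; rw [ha']; ring
        rw [this, Complex.ofReal_zero]
      · exact Matrix.diagonal_apply_ne _ hab
    · intro c _
      rw [SpMat_neg, zero_mul]
      have := val_le c; omega

lemma Sm_mul_Sp : SmMat twoS * SpMat twoS =
    Matrix.diagonal (fun a => ((spin twoS * (spin twoS + 1)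
      - mval twoS a * (mval twoS a + 1) : ℝ) : ℂ)) := by
  ext a b
  rw [Matrix.mul_apply]
  by_cases ha : 0 < (a:ℕ)
  · have hlt : (a:ℕ)-1 < N twoS := by have := a.isLt; omega
    have hc0v : ((⟨(a:ℕ)-1, hlt⟩ : Fin (N twoS)):ℕ) = (a:ℕ)-1 := rfl
    rw [Finset.sum_eq_single (⟨(a:ℕ)-1, hlt⟩ : Fin (N twoS))]
    · rw [SmMat_pos (by omega : (a:ℕ) = ((⟨(a:ℕ)-1, hlt⟩ : Fin (N twoS)):ℕ)+1)]
      by_cases hab : a = b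
      · subst hab
        rw [SpMat_pos (by omega), Matrix.diagonal_apply_eq]
        have harg : mval twoS (⟨(a:ℕ)-1, hlt⟩ : Fin (N twoS))
            * (mval twoS (⟨(a:ℕ)-1, hlt⟩ : Fin (N twoS)) - 1)
            = mval twoS a * (mval twoS a + 1) := by
          unfold mval
          rw [show ((((⟨(a:ℕ)-1, hlt⟩ : Fin (N twoS))):ℕ):ℝ) = ((a:ℕ):ℝ) - 1 by
            rw [hc0v, Nat.cast_sub (by omega : 1 ≤ (a:ℕ))]; push_cast; ring]
          ring
        rw [harg, ← Complex.ofReal_mul, Real.mul_self_sqrt (arg2_nonneg a)]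
      · rw [SpMat_neg, Matrix.diagonal_apply_ne _ hab, mul_zero]
        rw [hc0v]
        intro hc
        exact hab (Fin.ext (by omega))
    · intro c _ hc
      rw [SmMat_neg, zero_mul]
      intro h
      exact hc (Fin.ext (by rw [hc0v]; omega))
    · intro h; exact absurd (Finset.mem_univ _) h
  · have ha' : (a:ℕ) = 0 := by omega
    rw [Finset.sum_eq_zero]
    · symm
      by_cases hab : a = b
      · subst hab
        rw [Matrix.diagonal_apply_eq]
        have : spin twoS * (spin twoS + 1) - mval twoS a * (mval twoS a + 1) = 0 := by
          unfold mval spin; rw [ha']; ring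
        rw [this, Complex.ofReal_zero]
      · exact Matrix.diagonal_apply_ne _ hab
    · intro c _
      rw [SmMat_neg, zero_mul]
      omega

lemma SpSm_comm : SpMat twoS * SmMat twoS - SmMat twoS * SpMat twoS = (2:ℂ) • SzMat twoS := by
  rw [Sp_mul_Sm, Sm_mul_Sp]
  ext a b
  by_cases hab : a = b
  · subst hab
    simp only [Matrix.sub_apply, Matrix.diagonal_apply_eq, Matrix.smul_apply, SzMat,
      smul_eq_mul]
    push_cast; ring
  · simp [Matrix.diagonal_apply_ne _ hab, SzMat]

lemma Sy_comm_Sz : SyMat twoS * SzMat twoS - SzMat twoS * SyMat twoS = Complex.I • SxMat twoS := by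
  have e1 : SzMat twoS * SpMat twoS = SpMat twoS * SzMat twoS + SpMat twoS := by
    have h := Sz_comm_Sp (twoS := twoS)
    rw [sub_eq_iff_eq_add] at h
    rw [h]; abel
  have e2 : SzMat twoS * SmMat twoS = SmMat twoS * SzMat twoS - SmMat twoS := by
    have h := Sz_comm_Sm (twoS := twoS)
    rw [sub_eq_iff_eq_add] at h
    rw [h]; abel
  have key : (SpMat twoS - SmMat twoS) * SzMat twoS - SzMat twoS * (SpMat twoS - SmMat twoS)
      = -(SpMat twoS + SmMat twoS) := by
    rw [sub_mul, mul_sub, e1, e2]; abel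
  unfold SyMat SxMat
  rw [smul_mul_assoc, mul_smul_comm, ← smul_sub, key, smul_neg, ← neg_smul, smul_smul]
  congr 1
  rw [hI2]; ring

lemma Sy_comm_Sx : SyMat twoS * SxMat twoS - SxMat twoS * SyMat twoS
    = (-Complex.I) • SzMat twoS := by
  have key2 : (SpMat twoS - SmMat twoS) * (SpMat twoS + SmMat twoS)
      - (SpMat twoS + SmMat twoS) * (SpMat twoS - SmMat twoS)
      = (SpMat twoS * SmMat twoS - SmMat twoS * SpMat twoS)
        + (SpMat twoS * SmMat twoS - SmMat twoS * SpMat twoS) := by noncomm_ring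
  have key3 : (SpMat twoS - SmMat twoS) * (SpMat twoS + SmMat twoS)
      - (SpMat twoS + SmMat twoS) * (SpMat twoS - SmMat twoS) = (4:ℂ) • SzMat twoS := by
    rw [key2, SpSm_comm, ← add_smul]; norm_num
  unfold SyMat SxMat
  rw [smul_mul_assoc, mul_smul_comm, smul_smul, smul_mul_assoc, mul_smul_comm, smul_smul,
    mul_comm ((2:ℂ))⁻¹ (((2:ℂ)*Complex.I))⁻¹, ← smul_sub, key3, smul_smul]
  congr 1
  rw [hI2]; ring

end Aux

section Aux2
variable {twoS L : ℕ}

lemma site_apply_pos {j : Fin L} {A} {x y : Conf twoS L} (h : ∀ i, i ≠ j → x i = y i) :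
    site twoS L j A x y = A (x j) (y j) := by
  unfold site; rw [Matrix.of_apply, if_pos h]

lemma site_apply_neg {j : Fin L} {A} {x y : Conf twoS L} (h : ¬ ∀ i, i ≠ j → x i = y i) :
    site twoS L j A x y = 0 := by
  unfold site; rw [Matrix.of_apply, if_neg h]

lemma sum_collapse {α : Type*} [AddCommMonoid α] (j : Fin L) (x : Conf twoS L)
    (g : Conf twoS L → α)
    (hg : ∀ z : Conf twoS L, ¬ (∀ i, i ≠ j → x i = z i) → g z = 0) :
    ∑ z : Conf twoS L, g z = ∑ k : Fin (N twoS), g (Function.update x j k) := by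
  classical
  rw [← Finset.sum_filter_of_ne (p := fun z => ∀ i, i ≠ j → x i = z i)
    (fun z _ h => by by_contra hc; exact h (hg z hc))]
  refine Finset.sum_bij' (fun z _ => z j) (fun k _ => Function.update x j k)
    ?_ ?_ ?_ ?_ ?_
  · intro a _; exact Finset.mem_univ _
  · intro k _
    rw [Finset.mem_filter]
    exact ⟨Finset.mem_univ _, fun i hij => (Function.update_of_ne hij k x).symm⟩
  · intro z hz
    funext i
    by_cases hij : i = j
    · subst hij; simp only [Function.update_self]
    · simp only [Function.update_of_ne hij]
      exact (Finset.mem_filter.mp hz).2 i hij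
  · intro k _; simp only [Function.update_self]
  · intro z hz
    congr 1
    funext i
    by_cases hij : i = j
    · subst hij; simp only [Function.update_self]
    · simp only [Function.update_of_ne hij]
      exact ((Finset.mem_filter.mp hz).2 i hij).symm

lemma site_mul_same (j : Fin L) (A B : Matrix (Fin (N twoS)) (Fin (N twoS)) ℂ) :
    site twoS L j A * site twoS L j B = site twoS L j (A * B) := by
  ext x y
  rw [Matrix.mul_apply]
  rw [sum_collapse j x _ (fun z hz => by rw [site_apply_neg hz, zero_mul])]
  by_cases h : ∀ i, i ≠ j → x i = y i
  · rw [site_apply_pos h, Matrix.mul_apply]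
    refine Finset.sum_congr rfl fun k _ => ?_
    rw [site_apply_pos (fun i hij => (Function.update_of_ne hij k x).symm),
      Function.update_self,
      site_apply_pos (fun i hij => by rw [Function.update_of_ne hij]; exact h i hij),
      Function.update_self]
  · rw [site_apply_neg h]
    apply Finset.sum_eq_zero; intro k _
    rw [site_apply_pos (fun i hij => (Function.update_of_ne hij k x).symm),
      Function.update_self]
    rw [site_apply_neg, mul_zero]
    intro hc
    exact h (fun i hij => ((Function.update_of_ne hij k x).symm.trans (hc i hij)))

lemma site_mul_apply_ne {j l : Fin L} (hjl : j ≠ l) (A B)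
    (x y : Conf twoS L) :
    (site twoS L j A * site twoS L l B) x y =
      if ∀ i, i ≠ j → i ≠ l → x i = y i then A (x j) (y j) * B (x l) (y l) else 0 := by
  rw [Matrix.mul_apply]
  rw [sum_collapse j x _ (fun z hz => by rw [site_apply_neg hz, zero_mul])]
  have hxl : ∀ k, Function.update x j k l = x l :=
    fun k => Function.update_of_ne (Ne.symm hjl) k x
  by_cases hQ : ∀ i, i ≠ j → i ≠ l → x i = y i
  · rw [if_pos hQ]
    rw [Finset.sum_eq_single (y j)]
    · rw [site_apply_pos (fun i hij => (Function.update_of_ne hij _ x).symm),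
        Function.update_self]
      rw [site_apply_pos, hxl]
      intro i hil
      by_cases hij : i = j
      · subst hij; rw [Function.update_self]
      · rw [Function.update_of_ne hij]; exact hQ i hij hil
    · intro k _ hk
      rw [site_apply_pos (fun i hij => (Function.update_of_ne hij _ x).symm),
        Function.update_self]
      rw [site_apply_neg, mul_zero]
      intro hc
      exact hk (by rw [← hc j hjl, Function.update_self])
    · intro h; exact absurd (Finset.mem_univ _) h
  · rw [if_neg hQ]
    apply Finset.sum_eq_zero; intro k _
    rw [site_apply_pos (fun i hij => (Function.update_of_ne hij _ x).symm),
      Function.update_self]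
    rw [site_apply_neg, mul_zero]
    intro hc
    apply hQ
    intro i hij hil
    have := hc i hil
    rwa [Function.update_of_ne hij] at this

lemma site_comm {j l : Fin L} (hjl : j ≠ l) (A B) :
    site twoS L j A * site twoS L l B = site twoS L l B * site twoS L j A := by
  ext x y
  rw [site_mul_apply_ne hjl, site_mul_apply_ne hjl.symm]
  have hiff : (∀ i, i ≠ j → i ≠ l → x i = y i) ↔ (∀ i, i ≠ l → i ≠ j → x i = y i) :=
    ⟨fun h i h1 h2 => h i h2 h1, fun h i h1 h2 => h i h2 h1⟩
  rw [if_congr hiff rfl rfl]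
  split_ifs with h
  · ring
  · rfl

lemma site_diagonal (j : Fin L) (v : Fin (N twoS) → ℂ) :
    site twoS L j (Matrix.diagonal v) = Matrix.diagonal (fun x : Conf twoS L => v (x j)) := by
  ext x y
  by_cases hxy : x = y
  · subst hxy
    rw [site_apply_pos (fun _ _ => rfl), Matrix.diagonal_apply_eq, Matrix.diagonal_apply_eq]
  · rw [Matrix.diagonal_apply_ne _ hxy]
    by_cases h : ∀ i, i ≠ j → x i = y i
    · rw [site_apply_pos h, Matrix.diagonal_apply_ne]
      intro hc
      exact hxy (funext fun i => by
        by_cases hij : i = j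
        · subst hij; exact hc
        · exact h i hij)
    · rw [site_apply_neg h]

lemma site_sub (j : Fin L) (A B) :
    site twoS L j (A - B) = site twoS L j A - site twoS L j B := by
  ext x y
  rw [Matrix.sub_apply]
  by_cases h : ∀ i, i ≠ j → x i = y i
  · rw [site_apply_pos h, site_apply_pos h, site_apply_pos h, Matrix.sub_apply]
  · rw [site_apply_neg h, site_apply_neg h, site_apply_neg h, sub_zero]

lemma site_smul (j : Fin L) (c : ℂ) (A) :
    site twoS L j (c • A) = c • site twoS L j A := by
  ext x y
  rw [Matrix.smul_apply]
  by_cases h : ∀ i, i ≠ j → x i = y i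
  · rw [site_apply_pos h, site_apply_pos h, Matrix.smul_apply]
  · rw [site_apply_neg h, site_apply_neg h, smul_zero]

lemma site_conjTranspose (j : Fin L) (A) :
    (site twoS L j A)ᴴ = site twoS L j Aᴴ := by
  ext x y
  rw [Matrix.conjTranspose_apply]
  by_cases h : ∀ i, i ≠ j → x i = y i
  · rw [site_apply_pos h, site_apply_pos (fun i hij => (h i hij).symm),
      Matrix.conjTranspose_apply]
  · rw [site_apply_neg h, site_apply_neg (fun hc => h (fun i hij => (hc i hij).symm)),
      star_zero]

lemma SyT_comm_z (j : Fin L) :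
    SyT twoS L * site twoS L j (SzMat twoS) - site twoS L j (SzMat twoS) * SyT twoS L
      = Complex.I • site twoS L j (SxMat twoS) := by
  unfold SyT
  rw [Finset.sum_mul, Finset.mul_sum, ← Finset.sum_sub_distrib]
  rw [Finset.sum_eq_single j]
  · rw [site_mul_same, site_mul_same, ← site_sub, Sy_comm_Sz, site_smul]
  · intro k _ hkj
    rw [site_comm hkj, sub_self]
  · intro h; exact absurd (Finset.mem_univ j) h

lemma SyT_comm_x (j : Fin L) :
    SyT twoS L * site twoS L j (SxMat twoS) - site twoS L j (SxMat twoS) * SyT twoS L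
      = (-Complex.I) • site twoS L j (SzMat twoS) := by
  unfold SyT
  rw [Finset.sum_mul, Finset.mul_sum, ← Finset.sum_sub_distrib]
  rw [Finset.sum_eq_single j]
  · rw [site_mul_same, site_mul_same, ← site_sub, Sy_comm_Sx, site_smul]
  · intro k _ hkj
    rw [site_comm hkj, sub_self]
  · intro h; exact absurd (Finset.mem_univ j) h

end Aux2

section Rot
variable {Alg : Type*} [NormedRing Alg] [NormedAlgebra ℝ Alg] [CompleteSpace Alg]

lemma rot_anticomm (K B C : Alg) (hB : K * B - B * K = C) (hC : K * C - C * K = -B) :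
    NormedSpace.exp (Real.pi • K) * B = -(B * NormedSpace.exp (Real.pi • K)) := by
  have hB' : K * B = B * K + C := by
    have h := hB; rw [sub_eq_iff_eq_add] at h; rw [h]; abel
  have hC' : K * C = C * K - B := by
    have h := hC; rw [sub_eq_iff_eq_add] at h; rw [h]; abel
  set f : ℝ → Alg := fun t => NormedSpace.exp (t • (-K)) *
      (Real.cos t • B + Real.sin t • C) * NormedSpace.exp (t • K) with hf
  have key : ∀ t : ℝ, HasDerivAt f 0 t := by
    intro t
    have h1 := hasDerivAt_exp_smul_const (𝕂 := ℝ) (-K) t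
    have h3 := hasDerivAt_exp_smul_const (𝕂 := ℝ) K t
    have h2 : HasDerivAt (fun u : ℝ => Real.cos u • B + Real.sin u • C)
        ((-Real.sin t) • B + Real.cos t • C) t :=
      ((Real.hasDerivAt_cos t).smul_const B).add ((Real.hasDerivAt_sin t).smul_const C)
    have H := (h1.mul h2).mul h3
    convert H using 1
    · rw [hf]; rfl
    have hK : NormedSpace.exp (t • K) * K = K * NormedSpace.exp (t • K) :=
      (((Commute.refl K).smul_left t).exp_left).eq
    rw [hK]
    simp only [Pi.mul_apply]
    set E1 := NormedSpace.exp (t • (-K)) with hE1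
    set E2 := NormedSpace.exp (t • K) with hE2
    set M := Real.cos t • B + Real.sin t • C with hM
    set M' := (-Real.sin t) • B + Real.cos t • C with hM'
    have hfact : (E1 * -K * M + E1 * M') * E2 + E1 * M * (K * E2)
        = E1 * ((-K) * M + M' + M * K) * E2 := by noncomm_ring
    have hbr : (-K) * M + M' + M * K = 0 := by
      rw [hM, hM']
      simp only [neg_mul, mul_add, add_mul, mul_smul_comm, smul_mul_assoc, hB', hC']
      module
    rw [hfact, hbr, mul_zero, zero_mul]
  have hd : Differentiable ℝ f := fun t => (key t).differentiableAt
  have hcon : f Real.pi = f 0 := is_const_of_deriv_eq_zero hd (fun t => (key t).deriv) _ _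
  have hf0 : f 0 = B := by
    simp [hf, NormedSpace.exp_zero]
  have hfpi : f Real.pi = NormedSpace.exp (Real.pi • (-K)) * (-B)
      * NormedSpace.exp (Real.pi • K) := by
    rw [hf]
    simp [Real.cos_pi, Real.sin_pi]
  have hBB : NormedSpace.exp (Real.pi • (-K)) * (-B) * NormedSpace.exp (Real.pi • K)
      = B := hfpi.symm.trans (hcon.trans hf0)
  have hcomm : Commute (Real.pi • K) (Real.pi • (-K)) :=
    (((Commute.refl K).neg_right).smul_left Real.pi).smul_right Real.pi
  have hinv : NormedSpace.exp (Real.pi • K) * NormedSpace.exp (Real.pi • (-K)) = 1 := by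
    rw [← NormedSpace.exp_add_of_commute_of_mem_ball (𝕂 := ℝ) hcomm
      ((NormedSpace.expSeries_radius_eq_top ℝ Alg).symm ▸ edist_lt_top _ _)
      ((NormedSpace.expSeries_radius_eq_top ℝ Alg).symm ▸ edist_lt_top _ _), smul_neg, add_neg_cancel, NormedSpace.exp_zero]
  calc NormedSpace.exp (Real.pi • K) * B
      = NormedSpace.exp (Real.pi • K) * (NormedSpace.exp (Real.pi • (-K)) * (-B)
        * NormedSpace.exp (Real.pi • K)) := by rw [hBB]
    _ = (NormedSpace.exp (Real.pi • K) * NormedSpace.exp (Real.pi • (-K))) * (-B)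
        * NormedSpace.exp (Real.pi • K) := by noncomm_ring
    _ = -(B * NormedSpace.exp (Real.pi • K)) := by rw [hinv, one_mul]; noncomm_ring

end Rot

section Aux3
variable {twoS L : ℕ}

lemma Uy_anticomm (j : Fin L) :
    Uy twoS L * site twoS L j (SzMat twoS) = -(site twoS L j (SzMat twoS) * Uy twoS L) := by
  letI : SeminormedRing (Op twoS L) := Matrix.linftyOpSemiNormedRing
  letI : NormedRing (Op twoS L) := Matrix.linftyOpNormedRing
  letI : NormedAlgebra ℝ (Op twoS L) := Matrix.linftyOpNormedAlgebra
  letI : NormedAlgebra ℂ (Op twoS L) := Matrix.linftyOpNormedAlgebra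
  set K : Op twoS L := (-Complex.I) • SyT twoS L with hK
  have hB : K * site twoS L j (SzMat twoS) - site twoS L j (SzMat twoS) * K
      = site twoS L j (SxMat twoS) := by
    rw [hK, smul_mul_assoc, mul_smul_comm, ← smul_sub, SyT_comm_z j, smul_smul,
      neg_mul, Complex.I_mul_I, neg_neg, one_smul]
  have hC : K * site twoS L j (SxMat twoS) - site twoS L j (SxMat twoS) * K
      = -(site twoS L j (SzMat twoS)) := by
    rw [hK, smul_mul_assoc, mul_smul_comm, ← smul_sub, SyT_comm_x j, smul_smul,
      neg_mul_neg, Complex.I_mul_I, neg_one_smul]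
  have hUy : Uy twoS L = NormedSpace.exp (Real.pi • K) := by
    rw [Uy]
    congr 1
    rw [hK, smul_comm (Real.pi) (-Complex.I) (SyT twoS L)]
    rw [show Real.pi • SyT twoS L = ((Real.pi : ℝ) : ℂ) • SyT twoS L from
      (algebraMap_smul ℂ Real.pi (SyT twoS L)).symm]
    rw [smul_smul, mul_comm]
  rw [hUy]
  exact rot_anticomm K _ _ hB hC

lemma Uy_support {x y : Conf twoS L} (h : Uy twoS L x y ≠ 0) :
    y = fun j => Fin.rev (x j) := by
  funext j
  have h2 : (Uy twoS L * site twoS L j (SzMat twoS)) x y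
      = (-(site twoS L j (SzMat twoS) * Uy twoS L)) x y := by rw [Uy_anticomm j]
  rw [show site twoS L j (SzMat twoS)
    = Matrix.diagonal (fun z : Conf twoS L => ((mval twoS (z j) : ℝ) : ℂ)) from
    site_diagonal j _] at h2
  rw [Matrix.mul_diagonal, Matrix.neg_apply, Matrix.diagonal_mul] at h2
  have h3 : Uy twoS L x y * (((mval twoS (y j) : ℝ):ℂ) + ((mval twoS (x j) : ℝ):ℂ)) = 0 := by
    linear_combination h2
  rcases mul_eq_zero.mp h3 with h4 | h4
  · exact absurd h4 h
  · have h5 : mval twoS (y j) + mval twoS (x j) = 0 := by exact_mod_cast h4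
    have h6 : ((y j : ℕ) : ℝ) + ((x j : ℕ) : ℝ) = (twoS : ℝ) := by
      unfold mval spin at h5; linarith
    have h7 : ((y j : ℕ)) + ((x j : ℕ)) = twoS := by exact_mod_cast h6
    have h8 := val_le (x j)
    apply Fin.ext
    rw [Fin.val_rev]
    have hN : N twoS = twoS + 1 := rfl
    omega

lemma Sp_H : (SpMat twoS)ᴴ = SmMat twoS := by
  ext a b
  rw [Matrix.conjTranspose_apply]
  by_cases h : (a:ℕ) = (b:ℕ)+1
  · rw [SpMat_pos h.symm, SmMat_pos h]
    have harg : spin twoS * (spin twoS + 1) - mval twoS a * (mval twoS a + 1)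
        = spin twoS * (spin twoS + 1) - mval twoS b * (mval twoS b - 1) := by
      have h2 : ((a:ℕ):ℝ) = ((b:ℕ):ℝ) + 1 := by exact_mod_cast h
      unfold mval; rw [h2]; ring
    rw [harg]
    exact Complex.conj_ofReal _
  · rw [SpMat_neg (fun hc => h hc.symm), SmMat_neg h, star_zero]

lemma Sm_H : (SmMat twoS)ᴴ = SpMat twoS := by
  rw [← Sp_H, Matrix.conjTranspose_conjTranspose]

lemma Sy_H : (SyMat twoS)ᴴ = SyMat twoS := by
  unfold SyMat
  rw [Matrix.conjTranspose_smul, Matrix.conjTranspose_sub, Sp_H, Sm_H]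
  have hs : (starRingEnd ℂ) (((2:ℂ) * Complex.I)⁻¹) = -(((2:ℂ) * Complex.I)⁻¹) := by
    rw [hI2, show ((starRingEnd ℂ) (-Complex.I/2)) = (Complex.I/2) from by
      rw [map_div₀, map_neg, Complex.conj_I, Complex.conj_ofNat]; ring]
    ring
  rw [show star (((2:ℂ) * Complex.I)⁻¹) = -(((2:ℂ) * Complex.I)⁻¹) from hs]
  rw [neg_smul, ← smul_neg, neg_sub]

lemma SyT_H : (SyT twoS L)ᴴ = SyT twoS L := by
  unfold SyT
  rw [Matrix.conjTranspose_sum]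
  exact Finset.sum_congr rfl fun j _ => by rw [site_conjTranspose, Sy_H]

lemma Uy_H_mul_Uy : (Uy twoS L)ᴴ * Uy twoS L = 1 := by
  have h1 : (Uy twoS L)ᴴ
      = NormedSpace.exp (-((-Complex.I * ((Real.pi:ℝ):ℂ)) • SyT twoS L)) := by
    rw [Uy, ← Matrix.exp_conjTranspose]
    congr 1
    rw [Matrix.conjTranspose_smul, SyT_H, ← neg_smul]
    congr 1
    simp [map_mul, Complex.conj_I, Complex.conj_ofReal]
  rw [h1, Uy, ← Matrix.exp_add_of_commute _ _ ((Commute.refl ((-Complex.I * ((Real.pi:ℝ):ℂ)) • SyT twoS L)).neg_left),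
    neg_add_cancel, NormedSpace.exp_zero]

end Aux3

section Aux4
variable {twoS L : ℕ} [NeZero L]

def Eint (twoS L : ℕ) [NeZero L] (x : Conf twoS L) : ℤ :=
  ∑ j ∈ Finset.Icc 1 L, (j : ℤ) * (((x ((j : ℕ) : Fin L)) : ℕ) : ℤ)

lemma Pop_mul_apply (M : Op twoS L) (x y : Conf twoS L) :
    (Pop twoS L * M) x y = M (fun i => x (-i)) y := by
  rw [Matrix.mul_apply]
  rw [Finset.sum_eq_single (fun i => x (-i))]
  · rw [show Pop twoS L x (fun i => x (-i)) = 1 from ?_, one_mul]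
    unfold Pop
    rw [Matrix.of_apply, if_pos]
    funext i; simp only [neg_neg]
  · intro z _ hz
    unfold Pop
    rw [Matrix.of_apply, if_neg, zero_mul]
    intro hc; apply hz; funext i
    have h2 := congrFun hc (-i)
    simp only [neg_neg] at h2
    exact h2.symm
  · intro h; exact absurd (Finset.mem_univ _) h

lemma Pop_Pop : Pop twoS L * Pop twoS L = 1 := by
  ext x y
  rw [Pop_mul_apply]
  unfold Pop
  rw [Matrix.of_apply, Matrix.one_apply]
  have hiff : ((fun i => x (-i)) = fun i => y (-i)) ↔ x = y := by
    constructor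
    · intro h; funext i
      have h2 := congrFun h (-i)
      simpa [neg_neg] using h2
    · intro h; rw [h]
  rw [if_congr hiff rfl rfl]

lemma Pop_H : (Pop twoS L)ᴴ = Pop twoS L := by
  ext x y
  rw [Matrix.conjTranspose_apply]
  unfold Pop
  rw [Matrix.of_apply, Matrix.of_apply, apply_ite (star : ℂ → ℂ), star_one, star_zero]
  have hiff : (y = fun i => x (-i)) ↔ (x = fun i => y (-i)) := by
    constructor <;> intro h <;> funext i <;>
      (have h2 := congrFun h (-i); simp only [neg_neg] at h2; rw [h2])
  rw [if_congr hiff rfl rfl]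

lemma twistGen_diag :
    twistGen twoS L = Matrix.diagonal (fun x : Conf twoS L => -((Eint twoS L x : ℤ) : ℂ)) := by
  have h1 : SzMat twoS - ((spin twoS : ℝ) : ℂ) • (1 : Matrix (Fin (N twoS)) (Fin (N twoS)) ℂ)
      = Matrix.diagonal (fun k : Fin (N twoS) => -(((k:ℕ):ℂ))) := by
    ext a b
    by_cases hab : a = b
    · subst hab
      simp only [Matrix.sub_apply, SzMat, Matrix.diagonal_apply_eq, Matrix.smul_apply,
        Matrix.one_apply_eq, smul_eq_mul, mul_one]
      unfold mval
      push_cast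
      ring
    · simp only [Matrix.sub_apply, SzMat, Matrix.diagonal_apply_ne _ hab, Matrix.smul_apply,
        Matrix.one_apply_ne hab, smul_eq_mul, mul_zero, sub_zero]
  unfold twistGen
  rw [h1]
  ext x y
  rw [Matrix.sum_apply]
  by_cases hxy : x = y
  · subst hxy
    rw [Matrix.diagonal_apply_eq]
    have : ∀ j ∈ Finset.Icc 1 L, ((j : ℂ) • site twoS L ((j:ℕ) : Fin L)
        (Matrix.diagonal fun k : Fin (N twoS) => -(((k:ℕ):ℂ)))) x x = (j:ℂ) * -((((x ((j:ℕ) : Fin L)) : ℕ):ℂ)) := by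
      intro j _
      rw [site_diagonal, Matrix.smul_apply, Matrix.diagonal_apply_eq, smul_eq_mul]
    rw [Finset.sum_congr rfl this]
    unfold Eint
    push_cast
    rw [← Finset.sum_neg_distrib]
    exact Finset.sum_congr rfl fun j _ => by ring
  · rw [Matrix.diagonal_apply_ne _ hxy]
    apply Finset.sum_eq_zero
    intro j _
    rw [site_diagonal, Matrix.smul_apply, Matrix.diagonal_apply_ne _ hxy, smul_zero]

lemma Utw_diag (ε : ℝ) :
    Utw twoS L ε = Matrix.diagonal (fun x : Conf twoS L =>
      Complex.exp ((-(ε:ℂ) * ((2 * Real.pi / L : ℝ) : ℂ) * Complex.I)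
        * (-((Eint twoS L x : ℤ) : ℂ)))) := by
  rw [Utw, twistGen_diag, ← Matrix.diagonal_smul, Matrix.exp_diagonal]
  refine congrArg Matrix.diagonal (funext fun x => ?_)
  rw [Pi.coe_exp, Pi.smul_apply, smul_eq_mul]
  exact (congrFun Complex.exp_eq_exp_ℂ _).symm


lemma Eint_zmod (x : Conf twoS L) :
    ((Eint twoS L x : ℤ) : ZMod L) = ∑ k : Fin L, (((k:ℕ)) : ZMod L) * (((x k : ℕ)) : ZMod L) := by
  have h0 : ((Eint twoS L x : ℤ) : ZMod L)
      = ∑ j ∈ Finset.Icc 1 L, ((j : ZMod L)) * (((x ((j:ℕ): Fin L) : ℕ)) : ZMod L) := by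
    unfold Eint
    push_cast
    rfl
  rw [h0]
  refine Finset.sum_bij' (fun j _ => ((j:ℕ) : Fin L))
    (fun k _ => if (k:ℕ) = 0 then L else (k:ℕ)) ?_ ?_ ?_ ?_ ?_
  · intro a _; exact Finset.mem_univ _
  · intro k _
    beta_reduce
    rw [Finset.mem_Icc]
    have hL : 0 < L := Nat.pos_of_ne_zero (NeZero.ne L)
    have := k.isLt
    split_ifs <;> omega
  · intro j hj
    beta_reduce
    rw [Finset.mem_Icc] at hj
    have hL : 0 < L := Nat.pos_of_ne_zero (NeZero.ne L)
    have hv : (((j : Fin L)):ℕ) = j % L := Fin.val_natCast j L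
    by_cases hjL : j = L
    · subst hjL
      rw [if_pos (by rw [hv, Nat.mod_self])]
    · have hv2 : (((j : Fin L)):ℕ) = j := by rw [hv, Nat.mod_eq_of_lt (by omega)]
      rw [if_neg (by rw [hv2]; omega), hv2]
  · intro k _
    beta_reduce
    split_ifs with h
    · apply Fin.ext
      rw [Fin.val_natCast, Nat.mod_self]
      omega
    · apply Fin.ext
      rw [Fin.val_natCast, Nat.mod_eq_of_lt k.isLt]
  · intro j hj
    beta_reduce
    congr 1
    rw [Fin.val_natCast]
    rw [show ((j % L : ℕ) : ZMod L) = (j : ZMod L) from ZMod.natCast_mod j L]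

lemma nu_neg (k : Fin L) : ((((-k : Fin L)):ℕ) : ZMod L) = -(((k:ℕ)) : ZMod L) := by
  rcases eq_or_ne k 0 with h | h
  · subst h
    simp
  · have hL : 0 < L := Nat.pos_of_ne_zero (NeZero.ne L)
    have hk0 : 0 < (k:ℕ) := by
      rcases Nat.eq_zero_or_pos (k:ℕ) with h0 | h0
      · exact absurd (Fin.ext h0) h
      · exact h0
    have hneg : (((-k : Fin L)):ℕ) = L - (k:ℕ) := by
      rw [Fin.coe_neg]
      have := k.isLt
      rw [Nat.mod_eq_of_lt (by omega)]
    rw [hneg, Nat.cast_sub (le_of_lt k.isLt), ZMod.natCast_self, zero_sub]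

lemma Eint_flipneg (hLeven : Even L) (x : Conf twoS L) :
    ((Eint twoS L (fun i => Fin.rev (x (-i))) : ℤ) : ZMod L)
      = ((Eint twoS L x : ℤ) : ZMod L) + (twoS : ZMod L) * ((L/2 : ℕ) : ZMod L) := by
  rw [Eint_zmod, Eint_zmod]
  have hrev : ∀ a : Fin (N twoS), ((Fin.rev a : Fin (N twoS)) : ℕ) = twoS - (a:ℕ) := by
    intro a
    rw [Fin.val_rev]
    have hN : N twoS = twoS + 1 := rfl
    omega
  have h1 : (∑ k : Fin L, (((k:ℕ)) : ZMod L) * ((((fun i => Fin.rev (x (-i))) k : Fin (N twoS)) : ℕ) : ZMod L))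
      = ∑ k : Fin L, ((((-k : Fin L):ℕ)) : ZMod L) * (((Fin.rev (x k) : Fin (N twoS)) : ℕ) : ZMod L) := by
    refine (Fintype.sum_equiv (Equiv.neg (Fin L)) _ _ fun k => ?_).symm
    simp only [Equiv.neg_apply, neg_neg]
  rw [h1]
  have h2 : ∀ k : Fin L, ((((-k : Fin L):ℕ)) : ZMod L) * (((Fin.rev (x k) : Fin (N twoS)) : ℕ) : ZMod L)
      = (((k:ℕ)):ZMod L) * ((((x k : Fin (N twoS)) : ℕ)) : ZMod L) - (((k:ℕ)):ZMod L) * (twoS : ZMod L) := by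
    intro k
    rw [nu_neg, hrev, Nat.cast_sub (val_le _)]
    ring
  rw [Finset.sum_congr rfl (fun k _ => h2 k), Finset.sum_sub_distrib, ← Finset.sum_mul]
  have hsum0 : (∑ k : Fin L, (((k:ℕ)) : ZMod L)) = -(((L/2:ℕ)) : ZMod L) := by
    have hNat : ((∑ k ∈ Finset.range L, k) + L/2 : ℕ) = (L/2) * L := by
      obtain ⟨m, hm⟩ := hLeven
      subst hm
      have hL0 : 0 < m + m := Nat.pos_of_ne_zero (NeZero.ne _)
      have hs2 := Finset.sum_range_id_mul_two (m+m)
      have hmm : (m + m) * (m + m - 1) + 2*m = 4 * (m*m) := by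
        rcases m with _ | n
        · simp
        · have h1 : (n+1) + (n+1) - 1 = 2*n+1 := by omega
          rw [h1]
          ring
      rw [show (m+m)/2 = m from by omega]
      have hm2 : m*(m+m) = 2*(m*m) := by ring
      omega
    have hcast : (∑ k : Fin L, (((k:ℕ)) : ZMod L)) + ((L/2 : ℕ) : ZMod L) = 0 := by
      rw [show (∑ k : Fin L, (((k:ℕ)) : ZMod L)) = ((∑ k ∈ Finset.range L, k : ℕ) : ZMod L) from ?_]
      · rw [← Nat.cast_add, hNat, Nat.cast_mul, ZMod.natCast_self, mul_zero]
      · rw [Nat.cast_sum]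
        exact Fin.sum_univ_eq_sum_range (fun i => ((i:ℕ) : ZMod L)) L
    linear_combination hcast
  rw [hsum0]
  ring

lemma scalar_key (hL0 : 0 < L) (hLeven : Even L) (ε : ℝ)
    (hε : (ε:ℂ) = 1 ∨ (ε:ℂ) = -1) (a b : ℤ)
    (hab : ((a : ℤ) : ZMod L) = ((b : ℤ) : ZMod L) + (twoS : ZMod L) * ((L / 2 : ℕ) : ZMod L)) :
    Complex.exp ((-(ε:ℂ) * ((2 * Real.pi / L : ℝ) : ℂ) * Complex.I) * (-(a : ℂ)))
      = (-1 : ℂ) ^ twoS *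
        Complex.exp ((-(ε:ℂ) * ((2 * Real.pi / L : ℝ) : ℂ) * Complex.I) * (-(b : ℂ))) := by
  have hdvd : (L:ℤ) ∣ (a - b - (twoS : ℤ) * ((L/2 : ℕ) : ℤ)) := by
    rw [← ZMod.intCast_zmod_eq_zero_iff_dvd]
    simp only [Int.cast_sub, Int.cast_mul, Int.cast_natCast]
    rw [hab]
    ring
  obtain ⟨k, hk⟩ := hdvd
  have haint : a = b + (twoS:ℤ) * ((L/2:ℕ):ℤ) + (L:ℤ) * k := by linarith [hk]
  have ha : (a : ℂ) = (b:ℂ) + (twoS:ℂ) * ((L/2 : ℕ):ℂ) + (L:ℂ) * (k:ℂ) := by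
    have h := congrArg (fun z : ℤ => (z:ℂ)) haint
    simp only [Int.cast_add, Int.cast_sub, Int.cast_mul, Int.cast_natCast] at h
    exact h
  have hL2 : (L:ℂ) = ((L/2 : ℕ) : ℂ) * 2 := by
    have h2 : (L/2) * 2 = L := Nat.div_mul_cancel hLeven.two_dvd
    exact_mod_cast (congrArg (fun n : ℕ => (n:ℂ)) h2).symm
  have hLne : (L:ℂ) ≠ 0 := Nat.cast_ne_zero.mpr hL0.ne'
  have hL2ne : ((L/2:ℕ):ℂ) ≠ 0 := by
    intro h
    rw [h, zero_mul] at hL2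
    exact hLne hL2
  have hofreal : ((2 * Real.pi / L : ℝ) : ℂ) = 2 * (Real.pi:ℂ) / (L:ℂ) := by push_cast; ring
  rcases hε with hη | hη <;> rw [hη, hofreal, ha]
  · have harg : (-1 * (2 * (Real.pi:ℂ) / (L:ℂ)) * Complex.I)
        * (-((b:ℂ) + (twoS:ℂ) * ((L/2:ℕ):ℂ) + (L:ℂ) * (k:ℂ)))
        = (-1 * (2 * (Real.pi:ℂ) / (L:ℂ)) * Complex.I) * (-(b:ℂ))
          + ((twoS:ℂ) * ((Real.pi:ℂ) * Complex.I) + (k:ℂ) * (2 * (Real.pi:ℂ) * Complex.I)) := by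
      rw [hL2]
      field_simp
      ring
    rw [harg, Complex.exp_add, Complex.exp_add, Complex.exp_nat_mul, Complex.exp_pi_mul_I,
      Complex.exp_int_mul_two_pi_mul_I]
    ring
  · have harg : (-(-1) * (2 * (Real.pi:ℂ) / (L:ℂ)) * Complex.I)
        * (-((b:ℂ) + (twoS:ℂ) * ((L/2:ℕ):ℂ) + (L:ℂ) * (k:ℂ)))
        = (-(-1) * (2 * (Real.pi:ℂ) / (L:ℂ)) * Complex.I) * (-(b:ℂ))
          + ((twoS:ℂ) * (-((Real.pi:ℂ) * Complex.I)) + ((-k : ℤ):ℂ) * (2 * (Real.pi:ℂ) * Complex.I)) := by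
      rw [hL2]
      push_cast
      field_simp
      ring
    rw [harg, Complex.exp_add, Complex.exp_add, Complex.exp_nat_mul,
      Complex.exp_int_mul_two_pi_mul_I]
    rw [show Complex.exp (-((Real.pi:ℂ) * Complex.I)) = -1 from by
      rw [Complex.exp_neg, Complex.exp_pi_mul_I]; norm_num]
    ring

lemma main_comm (hL4 : 4 ≤ L) (hLeven : Even L) (ε : ℝ)
    (hε : ((ε:ℂ) = 1 ∨ (ε:ℂ) = -1)) :
    (Pop twoS L * Uy twoS L) * Utw twoS L ε
      = ((-1 : ℂ) ^ twoS) • (Utw twoS L ε * (Pop twoS L * Uy twoS L)) := by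
  have hL0 : 0 < L := by omega
  rw [Utw_diag]
  ext x y
  rw [Matrix.mul_diagonal, Matrix.smul_apply, Matrix.diagonal_mul, smul_eq_mul]
  by_cases h0 : (Pop twoS L * Uy twoS L) x y = 0
  · rw [h0]; ring
  · have hy : y = fun i => Fin.rev (x (-i)) := by
      rw [Pop_mul_apply] at h0
      exact Uy_support h0
    subst hy
    rw [scalar_key hL0 hLeven ε hε _ _ (Eint_flipneg hLeven x)]
    ring

lemma R_unitary : (Pop twoS L * Uy twoS L)ᴴ * (Pop twoS L * Uy twoS L) = 1 := by
  rw [Matrix.conjTranspose_mul, Pop_H]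
  calc (Uy twoS L)ᴴ * Pop twoS L * (Pop twoS L * Uy twoS L)
      = (Uy twoS L)ᴴ * ((Pop twoS L * Pop twoS L) * Uy twoS L) := by noncomm_ring
    _ = 1 := by rw [Pop_Pop, one_mul, Uy_H_mul_Uy]

lemma adj_dot (M : Op twoS L) (v w : Conf twoS L → ℂ) :
    dotProduct (star v) (Mᴴ.mulVec w) = dotProduct (star (M.mulVec v)) w := by
  rw [Matrix.dotProduct_mulVec, ← Matrix.star_mulVec]

end Aux4


/-- Theorem 8: `(P U^y_π) U^tw_{±2π} = (-1)^{2S} U^tw_{±2π} (P U^y_π)`;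
consequently, for `2S` odd, any eigenvector of `P U^y_π` (eigenvalue `±1`) is
orthogonal to its twist. -/
theorem combined_parity_spin_reversal_twist (twoS L : ℕ) [NeZero L]
    (hS : 0 < twoS) (hL4 : 4 ≤ L) (hLeven : Even L) :
    ((Pop twoS L * Uy twoS L) * Utw twoS L 1 =
        ((-1 : ℂ) ^ twoS) • (Utw twoS L 1 * (Pop twoS L * Uy twoS L)) ∧
      (Pop twoS L * Uy twoS L) * Utw twoS L (-1) =
        ((-1 : ℂ) ^ twoS) • (Utw twoS L (-1) * (Pop twoS L * Uy twoS L))) ∧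
    (Odd twoS → ∀ ψ₀ : Conf twoS L → ℂ,
      ((Pop twoS L * Uy twoS L).mulVec ψ₀ = ψ₀ ∨
        (Pop twoS L * Uy twoS L).mulVec ψ₀ = -ψ₀) →
      dotProduct (star ψ₀) ((Utw twoS L 1).mulVec ψ₀) = 0) := by
  have hc1 := main_comm (twoS := twoS) (L := L) hL4 hLeven 1 (Or.inl (by norm_num))
  have hc2 := main_comm (twoS := twoS) (L := L) hL4 hLeven (-1) (Or.inr (by norm_num))
  refine ⟨⟨hc1, hc2⟩, ?_⟩
  intro hodd ψ hψ
  set Rm := Pop twoS L * Uy twoS L with hRm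
  set T := Utw twoS L 1 with hT
  have hsign : ((-1 : ℂ) ^ twoS) = -1 := hodd.neg_one_pow
  have hcomm : Rm * T = -(T * Rm) := by rw [hc1, hsign]; exact neg_one_smul ℂ _
  have hTR : T * Rm = -(Rm * T) := by rw [hcomm, neg_neg]
  have e1 : Rmᴴ * (T * Rm) = -T := by
    rw [hTR, mul_neg, ← mul_assoc, R_unitary, one_mul]
  have e2 : dotProduct (star ψ) ((Rmᴴ * (T * Rm)).mulVec ψ)
      = -(dotProduct (star ψ) (T.mulVec ψ)) := by
    rw [e1, Matrix.neg_mulVec, dotProduct_neg]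
  have e3 : (Rmᴴ * (T * Rm)).mulVec ψ = Rmᴴ.mulVec (T.mulVec (Rm.mulVec ψ)) := by
    rw [← Matrix.mulVec_mulVec, ← Matrix.mulVec_mulVec]
  have e4 : dotProduct (star ψ) ((Rmᴴ * (T * Rm)).mulVec ψ)
      = dotProduct (star ψ) (T.mulVec ψ) := by
    rw [e3, adj_dot]
    rcases hψ with h | h
    · rw [h]
    · rw [h, Matrix.mulVec_neg, star_neg, neg_dotProduct, dotProduct_neg,
        neg_neg]
  have : dotProduct (star ψ) (T.mulVec ψ)
      = -(dotProduct (star ψ) (T.mulVec ψ)) := e4.symm.trans e2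
  have h2 : dotProduct (star ψ) (T.mulVec ψ) + dotProduct (star ψ) (T.mulVec ψ)
      = 0 := by linear_combination this
  exact add_self_eq_zero.mp h2


end LSM
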